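/- Let k be odd, S = ℤ/2kℤ, G = Aff(ℤ/2kℤ), and μ the Möbius function of the subgroup lattice of G. Then Q_rig(-1) = (1/|G|) ∑_{H ≤ G, H ⊄ K₀} μ(1,H) · 2^{|S/H|}, where K₀ is the even-translation subgroup and |S/H| is the number of H-orbits. -/

import Mathlib

attribute [local instance] Classical.propDecidable


open Pointwise

def affPerm (n : ℕ) (u : ZMod n) (v : (ZMod n)ˣ) : Equiv.Perm (ZMod n) where
  toFun x := v * x + u
  invFun x := (v⁻¹ : (ZMod n)ˣ) * (x - u)
  left_inv x := by simp
  right_inv x := by simp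

def Aff (n : ℕ) : Subgroup (Equiv.Perm (ZMod n)) where
  carrier := {σ | ∃ u v, σ = affPerm n u v}
  one_mem' := ⟨0, 1, Equiv.ext fun x => by simp [affPerm]⟩
  mul_mem' := by
    rintro σ τ ⟨u1, v1, rfl⟩ ⟨u2, v2, rfl⟩
    exact ⟨v1 * u2 + u1, v1 * v2, Equiv.ext fun x => by
      simp [affPerm, Equiv.Perm.mul_apply, mul_add, mul_assoc, add_assoc]⟩
  inv_mem' := by
    rintro σ ⟨u, v, rfl⟩
    refine ⟨-(↑v⁻¹ * u), v⁻¹, Equiv.ext fun x => ?_⟩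
    simp [affPerm, Equiv.Perm.inv_def, Equiv.symm, mul_sub, sub_eq_add_neg, mul_add, mul_neg]

def AffK0 (n : ℕ) : Subgroup (Equiv.Perm (ZMod n)) where
  carrier := {σ | ∃ u v, Even u ∧ σ = affPerm n u v}
  one_mem' := ⟨0, 1, ⟨0, (add_zero _).symm⟩, Equiv.ext fun x => by simp [affPerm]⟩
  mul_mem' := by
    rintro σ τ ⟨u1, v1, hu1, rfl⟩ ⟨u2, v2, hu2, rfl⟩
    exact ⟨v1 * u2 + u1, v1 * v2, (hu2.mul_left _).add hu1, Equiv.ext fun x => by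
      simp [affPerm, Equiv.Perm.mul_apply, mul_add, mul_assoc, add_assoc]⟩
  inv_mem' := by
    rintro σ ⟨u, v, hu, rfl⟩
    refine ⟨-(↑v⁻¹ * u), v⁻¹, (hu.mul_left _).neg, Equiv.ext fun x => ?_⟩
    simp [affPerm, Equiv.Perm.inv_def, Equiv.symm, mul_sub, sub_eq_add_neg, mul_add, mul_neg]

/-! ### Auxiliary machinery -/

noncomputable def quotFintype {K : Type*} [Group K] {S : Type*} [Fintype S] [MulAction K S] :
    Fintype (Quotient (MulAction.orbitRel K S)) :=
  @Quotient.fintype _ _ _ (fun _ _ => Classical.propDecidable _)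

attribute [local instance] quotFintype

section Gen
variable {K : Type*} [Group K] [Fintype K] {S : Type*} [Fintype S] [DecidableEq S] [MulAction K S]

lemma sum_invariant :
    (∑ A : Finset S, if (∀ g : K, g • A = A) then (-1:ℚ)^A.card else 0)
      = ∏ q : Quotient (MulAction.orbitRel K S),
          (1 + (-1:ℚ)^(Finset.univ.filter
            (fun x : S => (Quotient.mk (MulAction.orbitRel K S) x) = q)).card) := by
  classical
  set R := MulAction.orbitRel K S with hR
  set fib : Quotient R → Finset S :=
    fun q => Finset.univ.filter (fun x : S => Quotient.mk R x = q) with hfib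
  have hmk : ∀ (g : K) (x : S), Quotient.mk R (g • x) = Quotient.mk R x :=
    fun g x => Quotient.sound (MulAction.mem_orbit x g)
  have hexact : ∀ {x y : S}, Quotient.mk R x = Quotient.mk R y → ∃ g : K, g • y = x :=
    fun h => Quotient.exact h
  have hdisj : ∀ (T : Finset (Quotient R)), ∀ q1 ∈ T, ∀ q2 ∈ T, q1 ≠ q2 →
      Disjoint (fib q1) (fib q2) := by
    intro T q1 _ q2 _ hne
    refine Finset.disjoint_left.2 fun x hx1 hx2 => hne ?_
    simp only [hfib, Finset.mem_filter] at hx1 hx2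
    rw [← hx1.2, hx2.2]
  have hrecover : ∀ A : Finset S, (∀ g : K, g • A = A) →
      (A.image (Quotient.mk R)).biUnion fib = A := by
    intro A hA
    ext x
    simp only [Finset.mem_biUnion, hfib, Finset.mem_filter, Finset.mem_univ, true_and,
      Finset.mem_image]
    constructor
    · rintro ⟨q, ⟨y, hy, rfl⟩, hx⟩
      obtain ⟨g, hg⟩ := hexact hx
      rw [← hA g, ← hg]
      exact Finset.smul_mem_smul_finset hy
    · intro hx; exact ⟨Quotient.mk R x, ⟨x, hx, rfl⟩, rfl⟩
  rw [Finset.sum_ite, Finset.sum_const, smul_zero, add_zero]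
  have key : ∑ A ∈ Finset.univ.filter (fun A : Finset S => ∀ g : K, g • A = A),
      (-1:ℚ)^A.card
      = ∑ T : Finset (Quotient R), ∏ q ∈ T, (-1:ℚ)^(fib q).card := by
    refine Finset.sum_bij' (fun A _ => A.image (Quotient.mk R))
      (fun T _ => T.biUnion fib) ?_ ?_ ?_ ?_ ?_
    · intro A hA; exact Finset.mem_univ _
    · intro T _; simp only [Finset.mem_filter, Finset.mem_univ, true_and]
      intro g
      ext x
      simp only [Finset.mem_smul_finset, Finset.mem_biUnion, hfib, Finset.mem_filter,
        Finset.mem_univ, true_and]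
      constructor
      · rintro ⟨y, ⟨q, hq, hy⟩, rfl⟩
        exact ⟨q, hq, by rw [hmk g y, hy]⟩
      · rintro ⟨q, hq, hx⟩
        exact ⟨g⁻¹ • x, ⟨q, hq, by rw [hmk g⁻¹ x, hx]⟩, by simp⟩
    · intro A hA
      simp only [Finset.mem_filter, Finset.mem_univ, true_and] at hA
      exact hrecover A hA
    · intro T _
      ext q
      simp only [Finset.mem_image, Finset.mem_biUnion, hfib, Finset.mem_filter,
        Finset.mem_univ, true_and]
      constructor
      · rintro ⟨x, ⟨q', hq', rfl⟩, rfl⟩; exact hq'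
      · intro hq
        obtain ⟨x, rfl⟩ := Quotient.exists_rep q
        exact ⟨x, ⟨_, hq, rfl⟩, rfl⟩
    · intro A hA
      simp only [Finset.mem_filter, Finset.mem_univ, true_and] at hA
      have hcard : A.card = ∑ q ∈ A.image (Quotient.mk R), (fib q).card := by
        conv_lhs => rw [← hrecover A hA]
        exact Finset.card_biUnion (hdisj _)
      rw [hcard, ← Finset.prod_pow_eq_pow_sum]
  rw [key]
  have h2 := Finset.prod_add (fun q : Quotient R => (-1:ℚ)^(fib q).card)
    (fun _ => (1:ℚ)) Finset.univ
  simp only [Finset.prod_const_one, mul_one] at h2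
  rw [Finset.powerset_univ] at h2
  rw [← h2]
  exact Finset.prod_congr rfl fun q _ => by ring
lemma sum_invariant_sub {G : Type*} [Group G] [Fintype G] {S : Type*} [Fintype S]
    [DecidableEq S] [MulAction G S] (H : Subgroup G) :
    (∑ A : Finset S, if (∀ g : ↥H, g • A = A) then (-1:ℚ)^A.card else 0)
      = ∏ q : Quotient (MulAction.orbitRel ↥H S),
          (1 + (-1:ℚ)^(Finset.univ.filter
            (fun x : S => (Quotient.mk (MulAction.orbitRel ↥H S) x) = q)).card) :=
  sum_invariant
end Gen

section Parity
variable (k : ℕ) [NeZero (2*k)]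

def pr : ZMod (2*k) →+* ZMod 2 := ZMod.castHom ⟨k, rfl⟩ (ZMod 2)

lemma zmod2_cases : ∀ y : ZMod 2, y = 0 ∨ y = 1 := by decide

lemma pr_eq_zero_iff (x : ZMod (2*k)) : pr k x = 0 ↔ 2 ∣ x.val := by
  rw [pr, ZMod.castHom_apply, ← ZMod.natCast_val, ZMod.natCast_eq_zero_iff]

lemma even_iff_pr (u : ZMod (2*k)) : Even u ↔ pr k u = 0 := by
  constructor
  · rintro ⟨r, rfl⟩
    rw [map_add]
    have h : ∀ y : ZMod 2, y + y = 0 := by decide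
    exact h _
  · intro h
    obtain ⟨m, hm⟩ := (pr_eq_zero_iff k u).1 h
    refine ⟨(m : ZMod (2*k)), ?_⟩
    have h1 : ((u.val : ℕ) : ZMod (2*k)) = u := by
      rw [ZMod.natCast_val, ZMod.cast_id]
    rw [← h1, hm]
    push_cast
    ring

omit [NeZero (2*k)] in
lemma pr_unit (v : (ZMod (2*k))ˣ) : pr k (v : ZMod (2*k)) = 1 := by
  have h : IsUnit (pr k (v : ZMod (2*k))) := (v.isUnit).map (pr k)
  rcases zmod2_cases (pr k (v : ZMod (2*k))) with h0 | h1
  · rw [h0] at h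
    exact absurd (isUnit_zero_iff.1 h) (by decide)
  · exact h1

omit [NeZero (2*k)] in
lemma pr_affPerm (u : ZMod (2*k)) (v : (ZMod (2*k))ˣ) (x : ZMod (2*k)) :
    pr k (affPerm (2*k) u v x) = pr k x + pr k u := by
  show pr k ((v : ZMod (2*k)) * x + u) = _
  rw [map_add, map_mul, pr_unit, one_mul]

lemma card_even_filter :
    (Finset.univ.filter (fun x : ZMod (2*k) => pr k x = 0)).card = k := by
  have hk0 : 0 < k := by
    rcases Nat.eq_zero_or_pos k with h | h
    · exact absurd (by omega : 2*k = 0) (NeZero.ne (2*k))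
    · exact h
  have himg : Finset.univ.filter (fun x : ZMod (2*k) => pr k x = 0)
      = Finset.univ.image (fun i : Fin k => ((2*(i:ℕ) : ℕ) : ZMod (2*k))) := by
    ext x
    simp only [Finset.mem_filter, Finset.mem_univ, true_and, Finset.mem_image]
    rw [pr_eq_zero_iff]
    constructor
    · rintro ⟨m, hm⟩
      have hlt : m < k := by
        have := x.val_lt; omega
      refine ⟨⟨m, hlt⟩, ?_⟩
      have h1 : ((x.val : ℕ) : ZMod (2*k)) = x := by
        rw [ZMod.natCast_val, ZMod.cast_id]
      rw [← h1, hm]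
    · rintro ⟨i, rfl⟩
      rw [ZMod.val_natCast_of_lt (by omega)]
      exact ⟨i, rfl⟩
  have hinj : Function.Injective (fun i : Fin k => ((2*(i:ℕ) : ℕ) : ZMod (2*k))) := by
    intro i j hij
    simp only at hij
    have hi := ZMod.val_natCast_of_lt (show 2*(i:ℕ) < 2*k by omega)
    have hj := ZMod.val_natCast_of_lt (show 2*(j:ℕ) < 2*k by omega)
    have h2 : (((2*(i:ℕ) : ℕ) : ZMod (2*k))).val = (((2*(j:ℕ) : ℕ) : ZMod (2*k))).val := by
      rw [hij]
    rw [hi, hj] at h2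
    ext; omega
  rw [himg, Finset.card_image_of_injective _ hinj, Finset.card_univ, Fintype.card_fin]
end Parity

section Orbits
variable (k : ℕ) [NeZero (2*k)] (H : Subgroup ↥(Aff (2*k)))

lemma fib_even (hH : ¬ H ≤ (AffK0 (2*k)).subgroupOf (Aff (2*k))) :
    ∀ q : Quotient (MulAction.orbitRel ↥H (ZMod (2*k))),
    Even (Finset.univ.filter
      (fun x : ZMod (2*k) =>
        Quotient.mk (MulAction.orbitRel ↥H (ZMod (2*k))) x = q)).card := by
  classical
  rw [SetLike.not_le_iff_exists] at hH
  obtain ⟨σG, hσH, hσK⟩ := hH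
  obtain ⟨u, v, hσ⟩ := σG.2
  have hu : ¬ Even u := fun h => hσK (Subgroup.mem_subgroupOf.2 ⟨u, v, h, hσ⟩)
  have hpru : pr k u = 1 :=
    (zmod2_cases _).resolve_left (fun h0 => hu ((even_iff_pr k u).2 h0))
  have hflip : ∀ x : ZMod (2*k), pr k ((σG : Equiv.Perm (ZMod (2*k))) x) = pr k x + 1 := by
    intro x
    rw [show ((σG : Equiv.Perm (ZMod (2*k))) x) = affPerm (2*k) u v x from by rw [hσ],
      pr_affPerm, hpru]
  set R := MulAction.orbitRel ↥H (ZMod (2*k)) with hR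
  intro q
  have hmkg : ∀ (g : ↥H) (x : ZMod (2*k)), Quotient.mk R (g • x) = Quotient.mk R x :=
    fun g x => Quotient.sound (MulAction.mem_orbit x g)
  set F := Finset.univ.filter (fun x : ZMod (2*k) => Quotient.mk R x = q) with hF
  show Even F.card
  have hmem : ∀ x ∈ F, (σG : Equiv.Perm (ZMod (2*k))) x ∈ F := by
    intro x hx
    simp only [hF, Finset.mem_filter, Finset.mem_univ, true_and] at hx ⊢
    rw [← hx]
    exact hmkg ⟨σG, hσH⟩ x
  have hmem' : ∀ x ∈ F, (σG : Equiv.Perm (ZMod (2*k))).symm x ∈ F := by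
    intro x hx
    simp only [hF, Finset.mem_filter, Finset.mem_univ, true_and] at hx ⊢
    rw [← hx]
    exact hmkg (⟨σG, hσH⟩ : ↥H)⁻¹ x
  have hflip' : ∀ x : ZMod (2*k),
      pr k ((σG : Equiv.Perm (ZMod (2*k))).symm x) = pr k x + 1 := by
    intro x
    have h1 := hflip ((σG : Equiv.Perm (ZMod (2*k))).symm x)
    rw [Equiv.apply_symm_apply] at h1
    rcases zmod2_cases (pr k ((σG : Equiv.Perm (ZMod (2*k))).symm x)) with h0 | h0 <;>
      rw [h0] at h1 ⊢ <;> rw [h1] <;> decide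
  have hsplit := Finset.card_filter_add_card_filter_not
    (s := F) (fun x : ZMod (2*k) => pr k x = 0)
  have hbij : (F.filter (fun x => pr k x = 0)).card
      = (F.filter (fun x => ¬ pr k x = 0)).card := by
    refine Finset.card_bij' (fun x _ => (σG : Equiv.Perm (ZMod (2*k))) x)
      (fun y _ => (σG : Equiv.Perm (ZMod (2*k))).symm y) ?_ ?_ ?_ ?_
    · intro x hx
      simp only [Finset.mem_filter] at hx ⊢
      refine ⟨hmem x hx.1, ?_⟩
      rw [hflip, hx.2]
      decide
    · intro y hy
      simp only [Finset.mem_filter] at hy ⊢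
      refine ⟨hmem' y hy.1, ?_⟩
      rcases zmod2_cases (pr k y) with h0 | h1
      · exact absurd h0 hy.2
      · rw [hflip', h1]; decide
    · intro x _; exact Equiv.symm_apply_apply _ _
    · intro y _; exact Equiv.apply_symm_apply _ _
  exact ⟨(F.filter (fun x => pr k x = 0)).card, by omega⟩

lemma fib_odd (hk : Odd k) (hH : H ≤ (AffK0 (2*k)).subgroupOf (Aff (2*k))) :
    ∃ q : Quotient (MulAction.orbitRel ↥H (ZMod (2*k))),
      ¬ Even (Finset.univ.filter
        (fun x : ZMod (2*k) =>
          Quotient.mk (MulAction.orbitRel ↥H (ZMod (2*k))) x = q)).card := by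
  classical
  set R := MulAction.orbitRel ↥H (ZMod (2*k)) with hR
  have hpres : ∀ (g : ↥H) (x : ZMod (2*k)), pr k (g • x) = pr k x := by
    intro g x
    obtain ⟨u, v, hu, hg⟩ := Subgroup.mem_subgroupOf.1 (hH g.2)
    have : (g • x) = affPerm (2*k) u v x := by
      show ((g : ↥(Aff (2*k))) : Equiv.Perm (ZMod (2*k))) x = _
      rw [hg]
    rw [this, pr_affPerm, (even_iff_pr k u).1 hu, add_zero]
  set E := Finset.univ.filter (fun x : ZMod (2*k) => pr k x = 0) with hE
  have hEk : E.card = k := card_even_filter k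
  have hsum : E.card = ∑ q : Quotient R,
      (E.filter (fun x => Quotient.mk R x = q)).card :=
    Finset.card_eq_sum_card_fiberwise (fun x _ => Finset.mem_univ _)
  have hodd : ∃ q : Quotient R, ¬ Even ((E.filter (fun x => Quotient.mk R x = q)).card) := by
    by_contra hall
    push_neg at hall
    have : Even E.card := by
      rw [hsum]
      exact Finset.even_sum _ (fun q _ => hall q)
    rw [hEk] at this
    exact (Nat.not_even_iff_odd.2 hk) this
  obtain ⟨q, hq⟩ := hodd
  refine ⟨q, ?_⟩
  have hne : (E.filter (fun x => Quotient.mk R x = q)).Nonempty := by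
    rw [Finset.nonempty_iff_ne_empty]
    intro h
    rw [h] at hq
    exact hq (by rw [Finset.card_empty]; exact Even.zero)
  obtain ⟨y, hy⟩ := hne
  simp only [hE, Finset.mem_filter, Finset.mem_univ, true_and] at hy
  have hfib : Finset.univ.filter (fun x : ZMod (2*k) => Quotient.mk R x = q)
      = E.filter (fun x => Quotient.mk R x = q) := by
    ext x
    simp only [hE, Finset.mem_filter, Finset.mem_univ, true_and]
    constructor
    · intro hx
      refine ⟨?_, hx⟩
      have hxy : Quotient.mk R x = Quotient.mk R y := by rw [hx, hy.2]
      obtain ⟨g, hg⟩ : ∃ g : ↥H, g • y = x := Quotient.exact hxy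
      rw [← hg, hpres, hy.1]
    · intro hx; exact hx.2
  rw [hfib]
  exact hq
end Orbits
set_option maxHeartbeats 2000000
set_option synthInstance.maxHeartbeats 1000000

/-- For `k` odd, `Q_rig(-1) = (1/|G|) ∑_{H ≤ G, H ⊄ K₀} μ(1,H) 2^{|S/H|}` where
`G = Aff(ℤ/2kℤ)`, `μ` is the Möbius function of the subgroup lattice of `G` and `|S/H|`
is the number of `H`-orbits on `S = ℤ/2kℤ`. -/
theorem stmt_15 (k : ℕ) (hk : Odd k) (hk0 : 0 < k) [NeZero (2 * k)]
    (μ : Subgroup ↥(Aff (2 * k)) → ℤ) (hμ1 : μ ⊥ = 1)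
    (hrec : ∀ H : Subgroup ↥(Aff (2 * k)), H ≠ ⊥ →
      μ H = -∑ K ∈ Finset.univ.filter (fun K : Subgroup ↥(Aff (2 * k)) => K < H), μ K) :
    (Fintype.card ↥(Aff (2 * k)) : ℚ)⁻¹ *
        (∑ A : Finset (ZMod (2 * k)),
          if MulAction.stabilizer ↥(Aff (2 * k)) A = ⊥ then (-1 : ℚ) ^ A.card else 0) =
      (Fintype.card ↥(Aff (2 * k)) : ℚ)⁻¹ *
        ∑ H ∈ Finset.univ.filter
            (fun H : Subgroup ↥(Aff (2 * k)) =>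
              ¬ H ≤ (AffK0 (2 * k)).subgroupOf (Aff (2 * k))),
          (μ H : ℚ) * 2 ^ Nat.card (MulAction.orbitRel.Quotient ↥H (ZMod (2 * k))) := by
  classical
  congr 1
  -- Möbius property
  have hmob : ∀ K : Subgroup ↥(Aff (2 * k)),
      (∑ H ∈ Finset.univ.filter (fun H : Subgroup ↥(Aff (2*k)) => H ≤ K), μ H)
        = if K = ⊥ then 1 else 0 := by
    intro K
    by_cases hK : K = ⊥
    · subst hK
      have h1 : Finset.univ.filter (fun H : Subgroup ↥(Aff (2*k)) => H ≤ ⊥) = {⊥} := by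
        ext H
        simp [le_bot_iff]
      rw [h1, Finset.sum_singleton, hμ1, if_pos rfl]
    · rw [if_neg hK]
      have hins : Finset.univ.filter (fun H : Subgroup ↥(Aff (2*k)) => H ≤ K)
          = insert K (Finset.univ.filter (fun H : Subgroup ↥(Aff (2*k)) => H < K)) := by
        ext H
        simp only [Finset.mem_filter, Finset.mem_univ, true_and, Finset.mem_insert]
        constructor
        · intro h
          rcases eq_or_lt_of_le h with h' | h'
          · exact Or.inl h'
          · exact Or.inr h'
        · rintro (rfl | h)
          · exact le_refl _
          · exact le_of_lt h
      rw [hins, Finset.sum_insert (by simp), hrec K hK]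
      ring
  -- indicator expansion
  have hind : ∀ A : Finset (ZMod (2 * k)),
      (if MulAction.stabilizer ↥(Aff (2 * k)) A = ⊥ then (-1 : ℚ) ^ A.card else 0)
        = ∑ H : Subgroup ↥(Aff (2 * k)),
            (if H ≤ MulAction.stabilizer ↥(Aff (2 * k)) A
              then (μ H : ℚ) * (-1) ^ A.card else 0) := by
    intro A
    rw [← Finset.sum_filter, ← Finset.sum_mul]
    have : (∑ H ∈ Finset.univ.filter
        (fun H : Subgroup ↥(Aff (2*k)) => H ≤ MulAction.stabilizer ↥(Aff (2 * k)) A),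
        (μ H : ℚ))
        = ((if MulAction.stabilizer ↥(Aff (2 * k)) A = ⊥ then 1 else 0 : ℤ) : ℚ) := by
      rw [← hmob (MulAction.stabilizer ↥(Aff (2 * k)) A)]
      push_cast
      rfl
    rw [this]
    by_cases h : MulAction.stabilizer ↥(Aff (2 * k)) A = ⊥ <;> simp [h]
  rw [Finset.sum_congr rfl (fun A _ => hind A), Finset.sum_comm]
  -- inner sum per subgroup
  have hinner : ∀ H : Subgroup ↥(Aff (2 * k)),
      (∑ A : Finset (ZMod (2 * k)),
        if H ≤ MulAction.stabilizer ↥(Aff (2 * k)) A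
          then (μ H : ℚ) * (-1) ^ A.card else 0)
      = (μ H : ℚ) * ∑ A : Finset (ZMod (2 * k)),
          (if (∀ g : ↥H, g • A = A) then (-1:ℚ)^A.card else 0) := by
    intro H
    rw [Finset.mul_sum]
    refine Finset.sum_congr rfl fun A _ => ?_
    have hcond : (H ≤ MulAction.stabilizer ↥(Aff (2 * k)) A) ↔ (∀ g : ↥H, g • A = A) := by
      constructor
      · intro h g
        exact MulAction.mem_stabilizer_iff.1 (h g.2)
      · intro h σ hσ
        exact MulAction.mem_stabilizer_iff.2 (h ⟨σ, hσ⟩)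
    rw [mul_ite, mul_zero]
    by_cases h : H ≤ MulAction.stabilizer ↥(Aff (2 * k)) A
    · rw [if_pos h, if_pos (hcond.1 h)]
    · rw [if_neg h, if_neg (fun hh => h (hcond.2 hh))]
  rw [Finset.sum_congr rfl (fun H _ => hinner H)]
  -- evaluate via orbits
  have heval : ∀ H : Subgroup ↥(Aff (2 * k)),
      (∑ A : Finset (ZMod (2 * k)),
          (if (∀ g : ↥H, g • A = A) then (-1:ℚ)^A.card else 0))
      = if H ≤ (AffK0 (2 * k)).subgroupOf (Aff (2 * k)) then 0
        else 2 ^ Nat.card (MulAction.orbitRel.Quotient ↥H (ZMod (2 * k))) := by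
    intro H
    have hsi : (∑ A : Finset (ZMod (2 * k)),
          (if (∀ g : ↥H, g • A = A) then (-1:ℚ)^A.card else 0))
        = ∏ q : Quotient (MulAction.orbitRel ↥H (ZMod (2*k))),
            (1 + (-1:ℚ)^(Finset.univ.filter
              (fun x : ZMod (2*k) =>
                (Quotient.mk (MulAction.orbitRel ↥H (ZMod (2*k))) x) = q)).card) :=
      sum_invariant_sub H
    rw [hsi]
    by_cases hle : H ≤ (AffK0 (2 * k)).subgroupOf (Aff (2 * k))
    · rw [if_pos hle]
      obtain ⟨q, hq⟩ := fib_odd k H hk hle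
      refine Finset.prod_eq_zero (Finset.mem_univ q) ?_
      rw [(Nat.not_even_iff_odd.1 hq).neg_one_pow]
      ring
    · rw [if_neg hle]
      have h2 : ∀ q ∈ (Finset.univ : Finset (Quotient (MulAction.orbitRel ↥H (ZMod (2*k))))),
          (1 + (-1:ℚ)^(Finset.univ.filter
            (fun x : ZMod (2*k) =>
              (Quotient.mk (MulAction.orbitRel ↥H (ZMod (2*k))) x) = q)).card) = 2 := by
        intro q _
        rw [(fib_even k H hle q).neg_one_pow]
        norm_num
      rw [Finset.prod_congr rfl h2, Finset.prod_const, Finset.card_univ]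
      rw [Nat.card_eq_fintype_card]
  have hstep : (∑ H : Subgroup ↥(Aff (2 * k)),
        (μ H : ℚ) * ∑ A : Finset (ZMod (2 * k)),
          (if (∀ g : ↥H, g • A = A) then (-1:ℚ)^A.card else 0))
      = ∑ H : Subgroup ↥(Aff (2 * k)), (μ H : ℚ) *
          (if H ≤ (AffK0 (2 * k)).subgroupOf (Aff (2 * k)) then 0
            else 2 ^ Nat.card (MulAction.orbitRel.Quotient ↥H (ZMod (2 * k)))) :=
    Finset.sum_congr rfl fun H _ => by rw [heval H]
  rw [hstep, Finset.sum_filter]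
  refine Finset.sum_congr rfl fun H _ => ?_
  by_cases hle : H ≤ (AffK0 (2 * k)).subgroupOf (Aff (2 * k)) <;> simp [hle]
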